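/- There exist exactly N² rank-one projections P₁, …, P_{N²} (matrices of the form v vᴴ / (vᴴv) for nonzero v ∈ ℂ^N) that form a basis of the real vector space of Hermitian N×N matrices. -/

import Mathlib

open Matrix Module

namespace Stmt14Aux

variable (N : ℕ)

noncomputable abbrev H := selfAdjoint.submodule ℝ (Matrix (Fin N) (Fin N) ℂ)

lemma mem_H_iff (A : Matrix (Fin N) (Fin N) ℂ) :
    A ∈ H N ↔ Aᴴ = A := Iff.rfl

/-- An explicit real-linear equivalence between Hermitian `N×N` complex matrices and
real `N×N` matrices. -/
noncomputable def hermEquiv : H N ≃ₗ[ℝ] Matrix (Fin N) (Fin N) ℝ where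
  toFun A := fun i j => if i ≤ j then ((A : Matrix (Fin N) (Fin N) ℂ) i j).re
    else ((A : Matrix (Fin N) (Fin N) ℂ) j i).im
  map_add' A B := by
    funext i j
    change _ = (_ : ℝ) + _
    by_cases h : i ≤ j <;> simp [h, Matrix.add_apply]
  map_smul' r A := by
    funext i j
    change _ = r • (_ : ℝ)
    by_cases h : i ≤ j <;>
      simp [h, Complex.real_smul, Complex.re_ofReal_mul, Complex.im_ofReal_mul, Matrix.smul_apply]
  invFun B := ⟨fun i j => if i = j then (B i i : ℂ)
      else if i < j then (B i j : ℂ) + (B j i : ℂ) * Complex.I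
      else (B j i : ℂ) - (B i j : ℂ) * Complex.I, by
    refine (mem_H_iff N _).mpr ?_
    funext i j
    change star (_ : ℂ) = _
    simp only [Matrix.transpose, Matrix.of_apply]
    rcases lt_trichotomy i j with h | h | h
    · have h1 : ¬ (j = i) := (ne_of_lt h).symm
      have h2 : ¬ (j < i) := not_lt_of_gt h
      simp only [conjTranspose_apply, h1, h2, if_neg, ne_of_lt h, if_false, h, if_true]
      simp [Complex.ext_iff, h]
    · subst h; simp
    · have h1 : ¬ (i = j) := (ne_of_lt h).symm
      have h2 : ¬ (i < j) := not_lt_of_gt h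
      simp only [conjTranspose_apply, h1, h2, if_neg, ne_of_lt h, if_false, if_true]
      simp [Complex.ext_iff, h]⟩
  left_inv A := by
    have hA : (A : Matrix (Fin N) (Fin N) ℂ)ᴴ = (A : Matrix (Fin N) (Fin N) ℂ) := A.2
    apply Subtype.ext
    funext i j
    have key : ∀ a b : Fin N, ((A : Matrix (Fin N) (Fin N) ℂ) b a) =
        starRingEnd ℂ ((A : Matrix (Fin N) (Fin N) ℂ) a b) := by
      intro a b
      have := congrFun (congrFun hA b) a
      rw [conjTranspose_apply] at this
      exact this.symm
    rcases lt_trichotomy i j with h | h | h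
    · have h1 : ¬ (i = j) := ne_of_lt h
      have h2 : i ≤ j := le_of_lt h
      have h3 : ¬ (j ≤ i) := not_le_of_gt h
      simp only [h1, if_false, h, if_true, h2, h3, if_neg]
      exact Complex.re_add_im _
    · subst h
      have hre : ((A : Matrix (Fin N) (Fin N) ℂ) i i).im = 0 := by
        have h2 := (Complex.ext_iff.mp (key i i)).2
        simp only [Complex.conj_im] at h2
        linarith
      simp [Complex.ext_iff, hre]
    · have h1 : ¬ (i = j) := (ne_of_lt h).symm
      have h2 : ¬ (i < j) := not_lt_of_gt h
      have h3 : j ≤ i := le_of_lt h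
      have h4 : ¬ (i ≤ j) := not_le_of_gt h
      simp only [h1, if_false, h2, h3, if_true, h4, if_neg]
      rw [key j i]
      simp [Complex.ext_iff]
  right_inv B := by
    funext i j
    rcases lt_trichotomy i j with h | h | h
    · have h1 : ¬ (i = j) := ne_of_lt h
      simp [h, h1, le_of_lt h]
    · subst h; simp
    · have h1 : ¬ (j = i) := ne_of_lt h
      have h2 : ¬ (i ≤ j) := not_le_of_gt h
      simp [h, h1, h2, not_lt_of_gt h]

lemma finrank_H : finrank ℝ (H N) = N ^ 2 := by
  rw [(hermEquiv N).finrank_eq]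
  simp [Module.finrank_matrix, sq]

noncomputable instance : FiniteDimensional ℝ (H N) :=
  (hermEquiv N).symm.finiteDimensional

/-- The set of rank-one projections inside the Hermitian matrices. -/
def projSet : Set (H N) :=
  {A | ∃ v : Fin N → ℂ, v ≠ 0 ∧
    (A : Matrix (Fin N) (Fin N) ℂ) = (star v ⬝ᵥ v)⁻¹ • Matrix.vecMulVec v (star v)}

lemma vecMulVec_selfAdjoint (v : Fin N → ℂ) :
    Matrix.vecMulVec v (star v) ∈ H N := by
  rw [mem_H_iff]
  funext i j
  simp only [conjTranspose_apply, vecMulVec_apply, Pi.star_apply]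
  rw [StarMul.star_mul, star_star]

lemma span_projSet : Submodule.span ℝ (projSet N) = ⊤ := by
  rw [Submodule.eq_top_iff']
  intro A
  have hA : (A : Matrix (Fin N) (Fin N) ℂ).IsHermitian := A.2
  set U : Matrix (Fin N) (Fin N) ℂ := (hA.eigenvectorUnitary : Matrix (Fin N) (Fin N) ℂ)
    with hU
  -- columns of U
  set u : Fin N → Fin N → ℂ := fun k i => U i k with hu
  have hcol : ∀ k, star (u k) ⬝ᵥ u k = 1 := by
    intro k
    have h1 : star U * U = 1 := UnitaryGroup.star_mul_self hA.eigenvectorUnitary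
    have := congrFun (congrFun h1 k) k
    rw [Matrix.mul_apply] at this
    simp only [Matrix.one_apply_eq] at this
    rw [← this, dotProduct]
    apply Finset.sum_congr rfl
    intro i _
    simp [hu, conjTranspose_apply]
  have hvne : ∀ k, u k ≠ 0 := by
    intro k hk
    have := hcol k
    rw [hk] at this
    simp at this
  -- the rank-one projections
  have hmem : ∀ k, (⟨Matrix.vecMulVec (u k) (star (u k)), vecMulVec_selfAdjoint N (u k)⟩ : H N)
      ∈ projSet N := by
    intro k
    exact ⟨u k, hvne k, by rw [hcol k]; simp⟩
  have hsum : A = ∑ k, hA.eigenvalues k •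
      (⟨Matrix.vecMulVec (u k) (star (u k)), vecMulVec_selfAdjoint N (u k)⟩ : H N) := by
    apply Subtype.ext
    push_cast
    refine hA.spectral_theorem.trans ?_
    funext i j
    rw [Unitary.conjStarAlgAut_apply, Matrix.mul_apply, Matrix.sum_apply]
    apply Finset.sum_congr rfl
    intro k _
    simp only [Matrix.mul_diagonal, Function.comp_apply, Matrix.star_apply,
      Matrix.smul_apply, vecMulVec_apply, Pi.star_apply, hu, Complex.real_smul,
      RCLike.ofReal_alg]
    push_cast
    ring
  rw [hsum]
  exact Submodule.sum_mem _ fun k _ =>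
    Submodule.smul_mem _ _ (Submodule.subset_span (hmem k))

end Stmt14Aux

open Matrix in
theorem stmt_14 (N : ℕ) (hN : 0 < N) :
    ∃ P : Fin (N ^ 2) → Matrix (Fin N) (Fin N) ℂ,
      (∀ i, ∃ v : Fin N → ℂ, v ≠ 0 ∧
        P i = (star v ⬝ᵥ v)⁻¹ • Matrix.vecMulVec v (star v)) ∧
      ∃ b : Basis (Fin (N ^ 2)) ℝ (selfAdjoint.submodule ℝ (Matrix (Fin N) (Fin N) ℂ)),
        ∀ i, (b i : Matrix (Fin N) (Fin N) ℂ) = P i := by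
  classical
  obtain ⟨t, hts, hspan, hli⟩ := exists_linearIndependent ℝ (Stmt14Aux.projSet N)
  rw [Stmt14Aux.span_projSet] at hspan
  let b0 : Basis t ℝ (Stmt14Aux.H N) := Basis.mk hli (by rw [Subtype.range_coe, hspan])
  haveI : Fintype t := FiniteDimensional.fintypeBasisIndex b0
  have hcard : Fintype.card t = N ^ 2 := by
    rw [← Module.finrank_eq_card_basis b0, Stmt14Aux.finrank_H]
  let e : t ≃ Fin (N ^ 2) := Fintype.equivFinOfCardEq hcard
  let b : Basis (Fin (N ^ 2)) ℝ (Stmt14Aux.H N) := b0.reindex e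
  refine ⟨fun i => (b i : Matrix (Fin N) (Fin N) ℂ), ?_, ⟨b, fun i => rfl⟩⟩
  intro i
  have hbi : b i = (e.symm i : Stmt14Aux.H N) := by
    simp [b, b0, Basis.reindex_apply, Basis.mk_apply]
  have hmem : ((e.symm i : t) : Stmt14Aux.H N) ∈ Stmt14Aux.projSet N := hts (e.symm i).2
  obtain ⟨v, hv, hEq⟩ := hmem
  refine ⟨v, hv, ?_⟩
  show ((b i : Stmt14Aux.H N) : Matrix (Fin N) (Fin N) ℂ) = _
  rw [hbi]
  exact hEq
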